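/- The connection coefficients of a flat Levi-Civita connection on (ℤ₄, {1,2}) realize a representation of ℤ₄ of order four: define φ : ℝ² → ℝ² (partially) by φ(p, q) = (−p/(1+p+q), −(2+p+q)/(1+p+q)). For all real p, q with 1 + p + q ≠ 0 and 1 + p ≠ 0, one has φ(φ(p, q)) = (−p/(1+p), q/(1+p)), and applying this formula twice returns (p, q); hence φ⁴(p, q) = (p, q) (all intermediate denominators being nonzero under these hypotheses). -/

import Mathlib

/-- The map `φ(p,q) = (−p/(1+p+q), −(2+p+q)/(1+p+q))` governing the translation
behaviour of the connection coefficients of a flat Levi-Civita connection on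
`(ℤ₄, {1,2})`. -/
noncomputable def phiZ4 (x : ℝ × ℝ) : ℝ × ℝ :=
  (-x.1 / (1 + x.1 + x.2), -(2 + x.1 + x.2) / (1 + x.1 + x.2))

/-- The connection coefficients of a flat Levi-Civita connection on
`(ℤ₄, {1,2})` realize a representation of `ℤ₄` of order four:
`φ²(p,q) = (−p/(1+p), q/(1+p))`, and applying this latter formula twice returns
`(p,q)`; hence `φ⁴(p,q) = (p,q)`. -/
theorem z4_12_connection_representation (p q : ℝ)
    (hpq : 1 + p + q ≠ 0) (hp : 1 + p ≠ 0) :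
    phiZ4 (phiZ4 (p, q)) = (-p / (1 + p), q / (1 + p)) ∧
    (fun x : ℝ × ℝ => (-x.1 / (1 + x.1), x.2 / (1 + x.1)))
        ((fun x : ℝ × ℝ => (-x.1 / (1 + x.1), x.2 / (1 + x.1))) (p, q)) = (p, q) := by
  constructor
  · simp only [phiZ4, Prod.mk.injEq]
    constructor
    · field_simp; rw [div_eq_iff (by intro h; apply hp; linarith)]; ring
    · have h3 : 1 + -p / (1 + p + q) + -(2 + p + q) / (1 + p + q) = -(1 + p) / (1 + p + q) := by
        field_simp; ring
      rw [h3]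
      field_simp
      ring
  · have h2 : 1 + -p / (1 + p) = 1 / (1 + p) := by field_simp; ring
    simp only [h2, Prod.mk.injEq]
    constructor <;> · field_simp
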